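/- Let (G, B) be a biased graph and K the 2-complex obtained from G by attaching a disc along each cycle of B. If (G, B) is group labellable (B = B_φ for some group labelling φ), then every cycle C ∉ B is a non-contractible closed curve in K; equivalently, there is no sequence of closed walks W_1, ..., W_n in G such that each W_{i+1} is obtained from W_i by rerouting along a balanced cycle, W_1 is a simple closed walk around an unbalanced cycle, and W_n is a simple closed walk around a balanced cycle. -/

import Mathlib

open scoped Classical

/-- A multigraph with a fixed orientation of each edge. -/
structure Multigraph (V E : Type*) where
  src : E → V
  tgt : E → V

namespace Multigraph

variable {V E : Type*}

/-- A step of a walk: an edge together with a direction (`true` = forward). -/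
abbrev Step (E : Type*) := E × Bool

def stepSrc (G : Multigraph V E) (s : Step E) : V :=
  if s.2 then G.src s.1 else G.tgt s.1

def stepTgt (G : Multigraph V E) (s : Step E) : V :=
  if s.2 then G.tgt s.1 else G.src s.1

/-- A walk: consecutive steps match up. -/
def IsWalk (G : Multigraph V E) (W : List (Step E)) : Prop :=
  W.Chain' fun s t => G.stepTgt s = G.stepSrc t

def IsClosedWalk (G : Multigraph V E) (W : List (Step E)) : Prop :=
  W ≠ [] ∧ G.IsWalk W ∧ W.getLast?.map G.stepTgt = W.head?.map G.stepSrc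

/-- A simple closed walk, i.e. a walk once around a cycle: no repeated
edges and no repeated vertices. -/
def IsCycleWalk (G : Multigraph V E) (W : List (Step E)) : Prop :=
  G.IsClosedWalk W ∧ (W.map Prod.fst).Nodup ∧ (W.map G.stepSrc).Nodup

def edgesOf [DecidableEq E] (W : List (Step E)) : Finset E :=
  (W.map Prod.fst).toFinset

/-- A cycle, identified with its edge set. -/
def IsCycle (G : Multigraph V E) [DecidableEq E] (C : Finset E) : Prop :=
  ∃ W, G.IsCycleWalk W ∧ edgesOf W = C

/-- A path from `x` to `y`: a walk with no repeated vertices. -/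
def IsPath (G : Multigraph V E) (x y : V) (P : List (Step E)) : Prop :=
  P ≠ [] ∧ G.IsWalk P ∧ P.head?.map G.stepSrc = some x ∧
    P.getLast?.map G.stepTgt = some y ∧ (P.map G.stepSrc ++ [y]).Nodup

/-- A theta subgraph: two distinct vertices `x, y` joined by three internally
disjoint paths. -/
def IsTheta (G : Multigraph V E) (x y : V) (P₁ P₂ P₃ : List (Step E)) : Prop :=
  x ≠ y ∧ G.IsPath x y P₁ ∧ G.IsPath x y P₂ ∧ G.IsPath x y P₃ ∧
    ((P₁.map G.stepSrc).tail).Disjoint ((P₂.map G.stepSrc).tail) ∧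
    ((P₁.map G.stepSrc).tail).Disjoint ((P₃.map G.stepSrc).tail) ∧
    ((P₂.map G.stepSrc).tail).Disjoint ((P₃.map G.stepSrc).tail) ∧
    (P₁.map Prod.fst).Disjoint (P₂.map Prod.fst) ∧
    (P₁.map Prod.fst).Disjoint (P₃.map Prod.fst) ∧
    (P₂.map Prod.fst).Disjoint (P₃.map Prod.fst)

/-- The theta property for a collection `B` of (edge sets of) cycles:
no theta subgraph contains exactly two members of `B`. -/
def ThetaProperty (G : Multigraph V E) [DecidableEq E] (B : Set (Finset E)) : Prop :=
  ∀ x y P₁ P₂ P₃, G.IsTheta x y P₁ P₂ P₃ →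
    ¬ ((edgesOf (P₁ ++ P₂) ∈ B ∧ edgesOf (P₁ ++ P₃) ∈ B ∧ edgesOf (P₂ ++ P₃) ∉ B) ∨
       (edgesOf (P₁ ++ P₂) ∈ B ∧ edgesOf (P₂ ++ P₃) ∈ B ∧ edgesOf (P₁ ++ P₃) ∉ B) ∨
       (edgesOf (P₁ ++ P₃) ∈ B ∧ edgesOf (P₂ ++ P₃) ∈ B ∧ edgesOf (P₁ ++ P₂) ∉ B))

/-- The label of a walk in a group-labelled graph. -/
def wlabel {Γ : Type*} [Group Γ] (φ : E → Γ) (W : List (Step E)) : Γ :=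
  (W.map fun s => if s.2 then φ s.1 else (φ s.1)⁻¹).prod

/-- The balanced cycles of a group labelling: cycles some (hence every) simple
closed walk around which has label `1`. -/
def BalancedCycles (G : Multigraph V E) [DecidableEq E] {Γ : Type*} [Group Γ]
    (φ : E → Γ) : Set (Finset E) :=
  {C | ∃ W, G.IsCycleWalk W ∧ edgesOf W = C ∧ wlabel φ W = 1}

/-- Reversal of a walk. -/
def revWalk (W : List (Step E)) : List (Step E) :=
  (W.map fun s => (s.1, !s.2)).reverse

/-- Deletion of an edge. -/
def delete (G : Multigraph V E) (e : E) : Multigraph V {f : E // f ≠ e} where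
  src f := G.src f.1
  tgt f := G.tgt f.1

/-- Contraction of a (non-loop) edge: the head of `e` is identified with its tail. -/
noncomputable def contract (G : Multigraph V E) (e : E) :
    Multigraph V {f : E // f ≠ e} where
  src f := if G.src f.1 = G.tgt e then G.src e else G.src f.1
  tgt f := if G.tgt f.1 = G.tgt e then G.src e else G.tgt f.1

/-- The biased graph obtained by deleting `e`: balanced cycles are the
balanced cycles avoiding `e`. -/
def deleteBias (G : Multigraph V E) [DecidableEq E] (B : Set (Finset E)) (e : E) :
    Set (Finset {f : E // f ≠ e}) :=
  {C | (G.delete e).IsCycle C ∧ C.image Subtype.val ∈ B}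

/-- The biased graph obtained by contracting `e`: a cycle `C` of `G/e` is
balanced iff `C ∈ B` or `E(C) ∪ {e}` is the edge set of a cycle of `B`. -/
noncomputable def contractBias (G : Multigraph V E) [DecidableEq E]
    (B : Set (Finset E)) (e : E) : Set (Finset {f : E // f ≠ e}) :=
  {C | (G.contract e).IsCycle C ∧
    (C.image Subtype.val ∈ B ∨ insert e (C.image Subtype.val) ∈ B)}

/-- `Γ`-labellability of a biased graph (with respect to the fixed orientation). -/
def GLabellable (G : Multigraph V E) [DecidableEq E] (Γ : Type*) [Group Γ]
    (B : Set (Finset E)) : Prop :=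
  ∃ φ : E → Γ, B = G.BalancedCycles φ

end Multigraph

/-- Rerouting a closed walk along a balanced cycle: the subwalk `P`, a path
from `u` to `v` lying on a cycle of `B` (whose other `u`–`v` path is `Q`), is
replaced by `Q`. -/
def Multigraph.Reroute {V E : Type*} [DecidableEq E] (G : Multigraph V E)
    (B : Set (Finset E)) (W W' : List (Multigraph.Step E)) : Prop :=
  ∃ (A S P Q : List (Multigraph.Step E)) (u v : V),
    W = A ++ P ++ S ∧ W' = A ++ Q ++ S ∧
    G.IsClosedWalk W ∧ G.IsClosedWalk W' ∧
    G.IsPath u v P ∧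
    G.IsCycleWalk (P ++ Multigraph.revWalk Q) ∧
    Multigraph.edgesOf (P ++ Multigraph.revWalk Q) ∈ B


namespace Multigraph

variable {V E : Type*} {Γ : Type*} [Group Γ] {G : Multigraph V E}

/-- getElem congruence for indices. -/
lemma gc {α : Type*} (l : List α) {i j : ℕ} (h : i = j) {hi : i < l.length}
    {hj : j < l.length} : l[i]'hi = l[j]'hj := by subst h; rfl

lemma perm_toFinset {α : Type*} [DecidableEq α] {l l' : List α} (h : l.Perm l') :
    l.toFinset = l'.toFinset := by
  ext a; simp [List.mem_toFinset, h.mem_iff]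

lemma stepSrc_flip (G : Multigraph V E) (s : Step E) :
    G.stepSrc (s.1, !s.2) = G.stepTgt s := by
  rcases s with ⟨e, b⟩; cases b <;> simp [stepSrc, stepTgt]

lemma stepTgt_flip (G : Multigraph V E) (s : Step E) :
    G.stepTgt (s.1, !s.2) = G.stepSrc s := by
  rcases s with ⟨e, b⟩; cases b <;> simp [stepSrc, stepTgt]

lemma src_cases (G : Multigraph V E) (s t : Step E) (h : s.1 = t.1) :
    G.stepSrc s = G.stepSrc t ∨ G.stepSrc s = G.stepTgt t := by
  rcases s with ⟨e, b⟩; rcases t with ⟨f, c⟩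
  dsimp at h; subst h
  cases b <;> cases c <;> simp [stepSrc, stepTgt]

lemma step_eq_of (G : Multigraph V E) {s t : Step E} (h1 : s.1 = t.1)
    (h2 : G.stepSrc s = G.stepSrc t) (h3 : G.stepSrc t ≠ G.stepTgt t) : s = t := by
  rcases s with ⟨e, b⟩; rcases t with ⟨f, c⟩
  dsimp at h1; subst h1
  cases b <;> cases c <;> simp_all [stepSrc, stepTgt]

/-- Cyclic adjacency condition for closed walks. -/
def CycAt (G : Multigraph V E) (W : List (Step E)) : Prop :=
  ∀ i j (hi : i < W.length) (hj : j < W.length), (i + 1) % W.length = j →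
    G.stepTgt (W[i]'hi) = G.stepSrc (W[j]'hj)

lemma closed_cyc {W : List (Step E)} (hW : G.IsClosedWalk W) : CycAt G W := by
  obtain ⟨hne, hwalk, hcl⟩ := hW
  intro i j hi hj hij
  subst hij
  rcases lt_or_ge (i + 1) W.length with hlt | hge
  · have hmod : (i + 1) % W.length = i + 1 := Nat.mod_eq_of_lt hlt
    have := List.isChain_iff_getElem.1 hwalk i (by omega)
    exact this.trans (congrArg G.stepSrc (gc W hmod.symm))
  · have hi' : i = W.length - 1 := by omega
    have hmod : (i + 1) % W.length = 0 := by
      rw [show i + 1 = W.length by omega]; exact Nat.mod_self _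
    rw [List.getLast?_eq_getLast_of_ne_nil hne, List.head?_eq_head hne,
        Option.map_some, Option.map_some, List.getLast_eq_getElem,
        List.head_eq_getElem] at hcl
    have hcl' := Option.some.inj hcl
    have e1 : G.stepTgt (W[i]'hi) = G.stepTgt (W[W.length - 1]'(by omega)) :=
      congrArg G.stepTgt (gc W hi')
    have e2 : G.stepSrc (W[0]'(by omega)) =
        G.stepSrc (W[(i + 1) % W.length]'hj) := congrArg G.stepSrc (gc W hmod.symm)
    exact (e1.trans hcl').trans e2

lemma isClosedWalk_of_cyc {W : List (Step E)} (hne : W ≠ []) (h : CycAt G W) :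
    G.IsClosedWalk W := by
  have hpos : 0 < W.length := List.length_pos_iff.2 hne
  refine ⟨hne, ?_, ?_⟩
  · refine List.isChain_iff_getElem.2 ?_
    intro i hi
    have h1 : i < W.length := by omega
    have h2 : i + 1 < W.length := by omega
    have := h i (i + 1) h1 h2 (Nat.mod_eq_of_lt h2)
    simpa [List.get_eq_getElem] using this
  · have h1 : W.length - 1 < W.length := by omega
    have hmod : (W.length - 1 + 1) % W.length = 0 := by
      rw [show W.length - 1 + 1 = W.length by omega]; exact Nat.mod_self _
    have := h (W.length - 1) 0 h1 hpos hmod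
    rw [List.getLast?_eq_getLast_of_ne_nil hne, List.head?_eq_head hne,
        Option.map_some, Option.map_some, List.getLast_eq_getElem,
        List.head_eq_getElem, this]

lemma vertex_inj {W : List (Step E)} (hW : G.IsCycleWalk W) {a b : ℕ}
    (ha : a < W.length) (hb : b < W.length)
    (h : G.stepSrc (W[a]'ha) = G.stepSrc (W[b]'hb)) : a = b := by
  have hnd := hW.2.2
  have la : a < (W.map G.stepSrc).length := by simpa using ha
  have lb : b < (W.map G.stepSrc).length := by simpa using hb
  have : (W.map G.stepSrc)[a]'la = (W.map G.stepSrc)[b]'lb := by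
    simpa [List.getElem_map] using h
  exact hnd.getElem_inj_iff.1 this

lemma edge_inj {W : List (Step E)} (hW : G.IsCycleWalk W) {a b : ℕ}
    (ha : a < W.length) (hb : b < W.length)
    (h : (W[a]'ha).1 = (W[b]'hb).1) : a = b := by
  have hnd := hW.2.1
  have la : a < (W.map Prod.fst).length := by simpa using ha
  have lb : b < (W.map Prod.fst).length := by simpa using hb
  have : (W.map Prod.fst)[a]'la = (W.map Prod.fst)[b]'lb := by
    simpa [List.getElem_map] using h
  exact hnd.getElem_inj_iff.1 this

lemma no_loop {W : List (Step E)} (hW : G.IsCycleWalk W) (h2 : 2 ≤ W.length)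
    {j : ℕ} (hj : j < W.length) : G.stepSrc (W[j]'hj) ≠ G.stepTgt (W[j]'hj) := by
  intro h
  have hpos : 0 < W.length := by omega
  have h' := closed_cyc hW.1 j ((j + 1) % W.length) hj (Nat.mod_lt _ hpos) rfl
  have key := vertex_inj hW hj (Nat.mod_lt _ hpos) (h.trans h')
  rcases lt_or_ge (j + 1) W.length with hlt | hge
  · rw [Nat.mod_eq_of_lt hlt] at key; omega
  · have hmod : (j + 1) % W.length = 0 := by
      rw [show j + 1 = W.length by omega]; exact Nat.mod_self _
    rw [hmod] at key; omega

lemma isCycleWalk_rotate {W : List (Step E)} (hW : G.IsCycleWalk W) (k : ℕ) :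
    G.IsCycleWalk (W.rotate k) := by
  obtain ⟨hcl, hend, hvnd⟩ := hW
  have hne := hcl.1
  have hpos : 0 < W.length := List.length_pos_iff.2 hne
  have hlen : (W.rotate k).length = W.length := W.length_rotate k
  refine ⟨isClosedWalk_of_cyc ?_ ?_, ?_, ?_⟩
  · intro h0
    apply hne
    have := congrArg List.length h0
    rw [hlen] at this
    exact List.length_eq_zero_iff.1 this
  · intro i j hi hj hij
    rw [List.getElem_rotate, List.getElem_rotate]
    apply closed_cyc hcl
    rw [Nat.mod_add_mod]
    rw [hlen] at hij
    rw [← hij, Nat.mod_add_mod]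
    congr 1
    omega
  · exact (((W.rotate_perm k).map Prod.fst).nodup_iff).2 hend
  · exact (((W.rotate_perm k).map G.stepSrc).nodup_iff).2 hvnd

lemma edgesOf_rotate [DecidableEq E] (W : List (Step E)) (k : ℕ) :
    edgesOf (W.rotate k) = edgesOf W :=
  perm_toFinset ((W.rotate_perm k).map Prod.fst)

lemma length_revWalk (W : List (Step E)) : (revWalk W).length = W.length := by
  simp [revWalk]

lemma getElem_revWalk (W : List (Step E)) {i : ℕ} (h : i < (revWalk W).length)
    (h2 : W.length - 1 - i < W.length) :
    (revWalk W)[i]'h = ((W[W.length - 1 - i]'h2).1, !(W[W.length - 1 - i]'h2).2) := by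
  simp [revWalk, List.getElem_reverse, List.getElem_map]

lemma map_fst_revWalk (W : List (Step E)) :
    (revWalk W).map Prod.fst = (W.map Prod.fst).reverse := by
  simp only [revWalk, List.map_reverse, List.map_map]
  exact congrArg List.reverse (List.map_congr_left fun s _ => rfl)

lemma map_src_revWalk (G : Multigraph V E) (W : List (Step E)) :
    (revWalk W).map G.stepSrc = (W.map G.stepTgt).reverse := by
  simp only [revWalk, List.map_reverse, List.map_map]
  exact congrArg List.reverse (List.map_congr_left fun s _ => stepSrc_flip G s)

lemma map_tgt_eq_rotate {W : List (Step E)} (hW : G.IsClosedWalk W) :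
    W.map G.stepTgt = (W.map G.stepSrc).rotate 1 := by
  have hpos : 0 < W.length := List.length_pos_iff.2 hW.1
  apply List.ext_getElem
  · simp [List.length_rotate]
  · intro i h1 h2
    have hiW : i < W.length := by simpa using h1
    rw [List.getElem_map, List.getElem_rotate, List.getElem_map]
    exact closed_cyc hW i ((i + 1) % W.length) hiW
      (Nat.mod_lt _ hpos) rfl |>.trans (congrArg G.stepSrc (gc W (by simp)))

lemma isCycleWalk_revWalk {W : List (Step E)} (hW : G.IsCycleWalk W) :
    G.IsCycleWalk (revWalk W) := by
  obtain ⟨hcl, hend, hvnd⟩ := hW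
  have hne := hcl.1
  have hpos : 0 < W.length := List.length_pos_iff.2 hne
  have hlen : (revWalk W).length = W.length := length_revWalk W
  refine ⟨isClosedWalk_of_cyc ?_ ?_, ?_, ?_⟩
  · intro h0
    apply hne
    have := congrArg List.length h0
    rw [hlen] at this
    exact List.length_eq_zero_iff.1 this
  · intro i j hi hj hij
    rw [hlen] at hi hj hij
    rw [getElem_revWalk W _ (by omega), getElem_revWalk W _ (by omega),
        stepTgt_flip, stepSrc_flip]
    symm
    apply closed_cyc hcl
    rcases lt_or_ge (i + 1) W.length with hlt | hge
    · have hj' : j = i + 1 := by rw [← hij, Nat.mod_eq_of_lt hlt]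
      subst hj'
      rw [show W.length - 1 - (i + 1) + 1 = W.length - 1 - i by omega]
      exact Nat.mod_eq_of_lt (by omega)
    · have hj' : j = 0 := by
        rw [← hij, show i + 1 = W.length by omega]; exact Nat.mod_self _
      subst hj'
      rw [show W.length - 1 - 0 + 1 = W.length by omega, Nat.mod_self]
      omega
  · rw [map_fst_revWalk]; exact List.nodup_reverse.2 hend
  · rw [map_src_revWalk, map_tgt_eq_rotate hcl]
    exact List.nodup_reverse.2 ((((W.map G.stepSrc).rotate_perm 1).nodup_iff).2 hvnd)

lemma edgesOf_revWalk [DecidableEq E] (W : List (Step E)) :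
    edgesOf (revWalk W) = edgesOf W := by
  simp only [edgesOf, map_fst_revWalk, List.toFinset_reverse]

/-- Two cycle walks with the same edge set and the same first step coincide. -/
lemma cycleWalk_eq_of_head [DecidableEq E] {W X : List (Step E)}
    (hW : G.IsCycleWalk W) (hX : G.IsCycleWalk X)
    (hE : edgesOf W = edgesOf X) (hh : W.head? = X.head?) : W = X := by
  have hWne := hW.1.1
  have hXne := hX.1.1
  have hWpos : 0 < W.length := List.length_pos_iff.2 hWne
  have hXpos : 0 < X.length := List.length_pos_iff.2 hXne
  simp only [edgesOf] at hE
  have hlen : W.length = X.length := by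
    have h1 : (W.map Prod.fst).toFinset.card = W.length := by
      rw [List.toFinset_card_of_nodup hW.2.1]; simp
    have h2 : (X.map Prod.fst).toFinset.card = X.length := by
      rw [List.toFinset_card_of_nodup hX.2.1]; simp
    rw [← h1, ← h2, hE]
  have key : ∀ k (hk : k < W.length) (hk' : k < X.length), W[k]'hk = X[k]'hk' := by
    intro k
    induction k with
    | zero =>
      intro hk hk'
      rw [List.head?_eq_head hWne, List.head?_eq_head hXne] at hh
      have := Option.some.inj hh
      rwa [List.head_eq_getElem, List.head_eq_getElem] at this
    | succ k ih =>
      intro hk hk'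
      have hkW : k < W.length := by omega
      have hkX : k < X.length := by omega
      have hprev := ih hkW hkX
      have hsrc : G.stepSrc (X[k + 1]'hk') = G.stepTgt (W[k]'hkW) := by
        have hx := closed_cyc hX.1 k (k + 1) hkX hk' (Nat.mod_eq_of_lt hk')
        rw [← hx, ← hprev]
      have hsrc2 : G.stepSrc (X[k + 1]'hk') = G.stepSrc (W[k + 1]'hk) := by
        rw [hsrc]
        exact closed_cyc hW.1 k (k + 1) hkW hk (Nat.mod_eq_of_lt hk)
      have hmem : (X[k + 1]'hk').1 ∈ W.map Prod.fst := by
        have hm : (X[k + 1]'hk').1 ∈ (X.map Prod.fst).toFinset := by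
          rw [List.mem_toFinset]
          exact List.mem_map_of_mem (X.getElem_mem hk')
        rw [← hE] at hm
        exact List.mem_toFinset.1 hm
      obtain ⟨i, hi, hie⟩ := List.mem_iff_getElem.1 hmem
      rw [List.getElem_map] at hie
      have hiW : i < W.length := by simpa using hi
      rcases src_cases G (X[k + 1]'hk') (W[i]'hiW) hie.symm with hc | hc
      · have hik : i = k + 1 := vertex_inj hW hiW hk (by rw [← hc, hsrc2])
        subst hik
        exact (step_eq_of G hie.symm hsrc2 (no_loop hW (by omega) hk)).symm
      · have ht := closed_cyc hW.1 i ((i + 1) % W.length) hiW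
          (Nat.mod_lt _ hWpos) rfl
        have hki : k + 1 = (i + 1) % W.length :=
          vertex_inj hW hk (Nat.mod_lt _ hWpos) (by rw [← hsrc2, hc, ht])
        have hik : i = k := by
          rcases lt_or_ge (i + 1) W.length with hlt | hge
          · rw [Nat.mod_eq_of_lt hlt] at hki; omega
          · have hmod : (i + 1) % W.length = 0 := by
              rw [show i + 1 = W.length by omega]; exact Nat.mod_self _
            rw [hmod] at hki; omega
        subst hik
        exfalso
        have hxx : (X[i]'hkX).1 = (X[i + 1]'hk').1 := by
          rw [← hprev]; exact hie
        have := edge_inj hX hkX hk' hxx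
        omega
  exact List.ext_getElem hlen fun n h1 h2 => key n h1 (by omega)

lemma wlabel_append (φ : E → Γ) (A B : List (Step E)) :
    wlabel φ (A ++ B) = wlabel φ A * wlabel φ B := by
  simp [wlabel]

lemma wlabel_revWalk (φ : E → Γ) (W : List (Step E)) :
    wlabel φ (revWalk W) = (wlabel φ W)⁻¹ := by
  induction W with
  | nil => simp [wlabel, revWalk]
  | cons s W ih =>
    rcases s with ⟨e, b⟩
    have hrev : revWalk ((e, b) :: W) = revWalk W ++ [(e, !b)] := by
      simp [revWalk]
    rw [hrev, wlabel_append, ih]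
    cases b <;> simp [wlabel, mul_inv_rev]

lemma mul_one_comm {a b : Γ} (h : a * b = 1) : b * a = 1 := by
  have := congrArg (fun x => a⁻¹ * x * a) h
  simpa [mul_assoc] using this

lemma wlabel_rotate_eq_one (φ : E → Γ) (W : List (Step E)) (k : ℕ) :
    (wlabel φ (W.rotate k) = 1 ↔ wlabel φ W = 1) := by
  rcases eq_or_ne W [] with rfl | hne
  · simp
  · have hpos : 0 < W.length := List.length_pos_iff.2 hne
    have h1 : W.rotate k = W.drop (k % W.length) ++ W.take (k % W.length) := by
      rw [← List.rotate_mod]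
      exact List.rotate_eq_drop_append_take (le_of_lt (Nat.mod_lt _ hpos))
    have h2 : wlabel φ W = wlabel φ (W.take (k % W.length)) *
        wlabel φ (W.drop (k % W.length)) := by
      conv_lhs => rw [← List.take_append_drop (k % W.length) W]
      rw [wlabel_append]
    rw [h1, wlabel_append, h2]
    constructor
    · exact mul_one_comm
    · exact mul_one_comm

/-- Two cycle walks with the same edge set have label `1` simultaneously. -/
lemma wlabel_eq_one_iff_of_edges [DecidableEq E] (φ : E → Γ) {W X : List (Step E)}
    (hW : G.IsCycleWalk W) (hX : G.IsCycleWalk X)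
    (hE : edgesOf W = edgesOf X) : (wlabel φ W = 1 ↔ wlabel φ X = 1) := by
  have hXne := hX.1.1
  have hWpos : 0 < W.length := List.length_pos_iff.2 hW.1.1
  have hXpos : 0 < X.length := List.length_pos_iff.2 hXne
  have hmem : (X[0]'hXpos).1 ∈ W.map Prod.fst := by
    have hm : (X[0]'hXpos).1 ∈ (X.map Prod.fst).toFinset := by
      rw [List.mem_toFinset]
      exact List.mem_map_of_mem (X.getElem_mem hXpos)
    have hE' : (W.map Prod.fst).toFinset = (X.map Prod.fst).toFinset := hE
    rw [← hE'] at hm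
    exact List.mem_toFinset.1 hm
  obtain ⟨i, hi, hie⟩ := List.mem_iff_getElem.1 hmem
  rw [List.getElem_map] at hie
  have hiW : i < W.length := by simpa using hi
  by_cases hb : (W[i]'hiW).2 = (X[0]'hXpos).2
  · have hrot := isCycleWalk_rotate hW i
    have hrotpos : 0 < (W.rotate i).length := by
      rw [List.length_rotate]; exact hWpos
    have hrotne : W.rotate i ≠ [] := by
      intro h0; rw [h0] at hrotpos; simp at hrotpos
    have hhead : (W.rotate i).head? = X.head? := by
      rw [List.head?_eq_head hrotne, List.head?_eq_head hXne,
          List.head_eq_getElem, List.head_eq_getElem]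
      congr 1
      rw [List.getElem_rotate]
      have harg : (0 + i) % W.length = i := by
        rw [Nat.zero_add, Nat.mod_eq_of_lt hiW]
      exact (gc W harg).trans (Prod.ext hie hb)
    have heq := cycleWalk_eq_of_head hrot hX ((edgesOf_rotate W i).trans hE) hhead
    rw [← heq, wlabel_rotate_eq_one]
  · have hrev := isCycleWalk_revWalk hW
    have hrot := isCycleWalk_rotate hrev (W.length - 1 - i)
    have hlenrev : (revWalk W).length = W.length := length_revWalk W
    have hYpos : 0 < ((revWalk W).rotate (W.length - 1 - i)).length := by
      rw [List.length_rotate, hlenrev]; exact hWpos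
    have hYne : (revWalk W).rotate (W.length - 1 - i) ≠ [] := by
      intro h0; rw [h0] at hYpos; simp at hYpos
    have hhead : ((revWalk W).rotate (W.length - 1 - i)).head? = X.head? := by
      rw [List.head?_eq_head hYne, List.head?_eq_head hXne,
          List.head_eq_getElem, List.head_eq_getElem]
      congr 1
      refine (List.getElem_rotate _ _ _ _).trans ?_
      have harg : (0 + (W.length - 1 - i)) % (revWalk W).length = W.length - 1 - i := by
        rw [hlenrev, Nat.zero_add]; exact Nat.mod_eq_of_lt (by omega)
      refine (gc (revWalk W) harg (hj := by rw [hlenrev]; omega)).trans ?_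
      have e' : W.length - 1 - (W.length - 1 - i) = i := by omega
      refine (getElem_revWalk W _ (by omega)).trans ?_
      refine (congrArg (fun s : Step E => (s.1, !s.2)) (gc W e' (hj := hiW))).trans ?_
      refine Prod.ext hie ?_
      have hne2 : ¬ ((W[i]'hiW).2 = (X[0]'hXpos).2) := hb
      rcases hw2 : (W[i]'hiW).2 <;> rcases hx2 : (X[0]'hXpos).2 <;> simp_all
    have heq := cycleWalk_eq_of_head hrot hX
      (((edgesOf_rotate (revWalk W) (W.length - 1 - i)).trans
        (edgesOf_revWalk W)).trans hE) hhead
    rw [← heq, wlabel_rotate_eq_one, wlabel_revWalk, inv_eq_one]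

lemma chain'_rel {α β : Type*} {R : α → α → Prop} {f : α → β}
    (hf : ∀ a b, R a b → f a = f b) :
    ∀ (l : List α) (a b : α), l.head? = some a → l.getLast? = some b →
      l.Chain' R → f a = f b := by
  intro l
  induction l with
  | nil => intro a b ha _ _; simp at ha
  | cons x l ih =>
    intro a b ha hb hc
    have hax : x = a := by simpa using ha
    subst hax
    cases l with
    | nil =>
      have : x = b := by simpa using hb
      rw [this]
    | cons y l' =>
      have hr : R x y := (List.isChain_cons_cons.1 hc).1
      have hc' : List.Chain' R (y :: l') := (List.isChain_cons_cons.1 hc).2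
      have hb' : (y :: l').getLast? = some b := by
        rw [← hb, List.getLast?_cons_cons]
      exact (hf x y hr).trans (ih y b rfl hb' hc')

end Multigraph

/-- If `(G, B)` is group labellable, then there is no sequence
of closed walks `W₁, …, Wₙ` such that each `W_{i+1}` is obtained from `W_i` by
rerouting along a balanced cycle, `W₁` is a simple closed walk around an
unbalanced cycle, and `Wₙ` is a simple closed walk around a balanced cycle. -/
theorem groupLabellable_no_reroute_sequence {V E : Type*} [DecidableEq E]
    (G : Multigraph V E) (B : Set (Finset E))
    (h : ∃ (Γ : Type) (inst : Group Γ) (φ : E → Γ),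
      B = @Multigraph.BalancedCycles V E G _ Γ inst φ) :
    ¬ ∃ (Ws : List (List (Multigraph.Step E)))
        (W₁ Wn : List (Multigraph.Step E)),
        Ws.head? = some W₁ ∧ Ws.getLast? = some Wn ∧
        Ws.Chain' (G.Reroute B) ∧
        G.IsCycleWalk W₁ ∧ Multigraph.edgesOf W₁ ∉ B ∧
        G.IsCycleWalk Wn ∧ Multigraph.edgesOf Wn ∈ B := by
  obtain ⟨Γ, instΓ, φ, hB⟩ := h
  rintro ⟨Ws, W₁, Wn, hhead, hlast, hchain, hc1, hnb, hcn, hbal⟩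
  have hstep : ∀ Wa Wb, G.Reroute B Wa Wb →
      Multigraph.wlabel φ Wa = Multigraph.wlabel φ Wb := by
    rintro Wa Wb ⟨A, S, P, Q, u, v, hWa, hWb, _, _, _, hcyc, hmemB⟩
    rw [hB] at hmemB
    obtain ⟨Y, hYc, hYe, hY1⟩ := hmemB
    have h1 : Multigraph.wlabel φ (P ++ Multigraph.revWalk Q) = 1 :=
      (Multigraph.wlabel_eq_one_iff_of_edges φ hcyc hYc hYe.symm).2 hY1
    have h2 : Multigraph.wlabel φ P = Multigraph.wlabel φ Q := by
      rw [Multigraph.wlabel_append, Multigraph.wlabel_revWalk] at h1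
      exact mul_inv_eq_one.1 h1
    rw [hWa, hWb]
    simp [Multigraph.wlabel_append, h2]
  have hlabel : Multigraph.wlabel φ W₁ = Multigraph.wlabel φ Wn :=
    Multigraph.chain'_rel hstep Ws W₁ Wn hhead hlast hchain
  have hWn1 : Multigraph.wlabel φ Wn = 1 := by
    rw [hB] at hbal
    obtain ⟨Y, hYc, hYe, hY1⟩ := hbal
    exact (Multigraph.wlabel_eq_one_iff_of_edges φ hcn hYc hYe.symm).2 hY1
  apply hnb
  rw [hB]
  exact ⟨W₁, hc1, rfl, hlabel.trans hWn1⟩
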